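/- Suppose a* ∈ ℝ^N is a global minimizer of the BPDN objective V. Then u* := a* + Φᵀ(y − Φa*) satisfies T_λ(u*) = a* and u* is a fixed point of the soft-thresholding LCA, i.e. 0 = −u* − (ΦᵀΦ − I)·T_λ(u*) + Φᵀy. -/

import Mathlib

open Matrix

/-- The soft-thresholding function `T_λ`. -/
noncomputable def softThresh (lam u : ℝ) : ℝ :=
  if |u| ≤ lam then 0 else u - lam * Real.sign u

/-- The BPDN objective `V(a) = (1/2)‖y − Φa‖₂² + λ‖a‖₁`. -/
noncomputable def bpdn {M N : ℕ} (Φ : Matrix (Fin M) (Fin N) ℝ)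
    (y : Fin M → ℝ) (lam : ℝ) (a : Fin N → ℝ) : ℝ :=
  (1 / 2) * ∑ m, (y m - (Φ *ᵥ a) m) ^ 2 + lam * ∑ n, |a n|

lemma contra (C e t : ℝ) (hC : 0 ≤ C) (ht : 0 < t) (he : e < 0)
    (h1 : 0 ≤ (1/2)*C*t^2 + e*t) (h2 : (C+1)*t ≤ -e) : False := by
  nlinarith [mul_pos ht ht, mul_nonneg hC (sq_nonneg t),
    mul_le_mul_of_nonneg_right h2 ht.le]

lemma key (C g s lam : ℝ) (hC : 0 ≤ C) (hlam : 0 < lam)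
    (h : ∀ t : ℝ, 0 ≤ (1/2)*C*t^2 - g*t + lam*(|s+t| - |s|)) :
    softThresh lam (s + g) = s := by
  rcases lt_trichotomy s 0 with hs | hs | hs
  · -- s < 0 : show g = -lam
    have hg : g = -lam := by
      by_contra hne
      rcases lt_or_gt_of_ne hne with hlt | hgt
      · set t := (-lam - g)/(C+1) with ht
        have htpos : 0 < t := div_pos (by linarith) (by linarith)
        have h1 := h (-t)
        have habs : |s + -t| - |s| = t := by
          rw [abs_of_nonpos (by linarith), abs_of_nonpos hs.le]; ring
        rw [habs] at h1
        refine contra C (g + lam) t hC htpos (by linarith) (by linarith) ?_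
        rw [ht]; field_simp; try linarith
      · set t := min (-s) ((g + lam)/(C+1)) with ht
        have htpos : 0 < t := lt_min (by linarith) (div_pos (by linarith) (by linarith))
        have htle : t ≤ -s := min_le_left _ _
        have h1 := h t
        have habs : |s + t| - |s| = -t := by
          rw [abs_of_nonpos (by linarith), abs_of_nonpos hs.le]; ring
        rw [habs] at h1
        refine contra C (-g - lam) t hC htpos (by linarith) (by linarith) ?_
        have h2 : t ≤ (g + lam)/(C+1) := min_le_right _ _
        have h2b := (le_div_iff₀ (by linarith : (0:ℝ) < C+1)).mp h2; linarith
    have habs : ¬ |s + g| ≤ lam := by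
      rw [hg, abs_of_nonpos (by linarith)]; push_neg; linarith
    have hsign : Real.sign (s + g) = -1 := Real.sign_of_neg (by rw [hg]; linarith)
    simp only [softThresh, if_neg habs, hsign]; rw [hg]; ring
  · -- s = 0 : show |g| ≤ lam
    subst hs
    have hg : |g| ≤ lam := by
      by_contra hgt
      push_neg at hgt
      rcases le_or_gt g 0 with hgle | hgpos
      · have hglt : g < -lam := by rw [abs_of_nonpos hgle] at hgt; linarith
        set t := (-lam - g)/(C+1) with ht
        have htpos : 0 < t := div_pos (by linarith) (by linarith)
        have h1 := h (-t)
        have habs : |(0:ℝ) + -t| - |(0:ℝ)| = t := by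
          simp [abs_of_nonneg htpos.le]
        rw [habs] at h1
        refine contra C (g + lam) t hC htpos (by linarith) (by linarith) ?_
        rw [ht]; field_simp; try linarith
      · have hglt : lam < g := by rwa [abs_of_pos hgpos] at hgt
        set t := (g - lam)/(C+1) with ht
        have htpos : 0 < t := div_pos (by linarith) (by linarith)
        have h1 := h t
        have habs : |(0:ℝ) + t| - |(0:ℝ)| = t := by simp [abs_of_nonneg htpos.le]
        rw [habs] at h1
        refine contra C (lam - g) t hC htpos (by linarith) (by linarith) ?_
        rw [ht]; field_simp; try ring; try linarith
    simp [softThresh, hg]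
  · -- s > 0 : show g = lam
    have hg : g = lam := by
      by_contra hne
      rcases lt_or_gt_of_ne hne with hlt | hgt
      · set t := min s ((lam - g)/(C+1)) with ht
        have htpos : 0 < t := lt_min hs (div_pos (by linarith) (by linarith))
        have htle : t ≤ s := min_le_left _ _
        have h1 := h (-t)
        have habs : |s + -t| - |s| = -t := by
          rw [abs_of_nonneg (by linarith), abs_of_nonneg hs.le]; ring
        rw [habs] at h1
        refine contra C (g - lam) t hC htpos (by linarith) (by linarith) ?_
        have h2 : t ≤ (lam - g)/(C+1) := min_le_right _ _
        have h2b := (le_div_iff₀ (by linarith : (0:ℝ) < C+1)).mp h2; linarith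
      · set t := (g - lam)/(C+1) with ht
        have htpos : 0 < t := div_pos (by linarith) (by linarith)
        have h1 := h t
        have habs : |s + t| - |s| = t := by
          rw [abs_of_nonneg (by linarith), abs_of_nonneg hs.le]; ring
        rw [habs] at h1
        refine contra C (lam - g) t hC htpos (by linarith) (by linarith) ?_
        rw [ht]; field_simp; try ring; try linarith
    have habs : ¬ |s + g| ≤ lam := by
      rw [hg, abs_of_nonneg (by linarith)]; push_neg; linarith
    have hsign : Real.sign (s + g) = 1 := Real.sign_of_pos (by rw [hg]; linarith)
    simp only [softThresh, if_neg habs, hsign]; rw [hg]; ring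

/-- if `a*` is a global minimizer of the BPDN objective, then
`u* := a* + Φᵀ(y − Φa*)` satisfies `T_λ(u*) = a*` and `u*` is a fixed point of
the soft-thresholding LCA. -/
theorem stmt1 {M N : ℕ} (hM : 0 < M) (hN : 0 < N)
    (Φ : Matrix (Fin M) (Fin N) ℝ) (y : Fin M → ℝ)
    (lam : ℝ) (hlam : 0 < lam) (astar : Fin N → ℝ)
    (hmin : ∀ a : Fin N → ℝ, bpdn Φ y lam astar ≤ bpdn Φ y lam a) :
    (fun n => softThresh lam ((astar + Φᵀ *ᵥ (y - Φ *ᵥ astar)) n)) = astar ∧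
    (0 : Fin N → ℝ) =
      -(astar + Φᵀ *ᵥ (y - Φ *ᵥ astar))
        - (Φᵀ * Φ - 1) *ᵥ
            (fun n => softThresh lam ((astar + Φᵀ *ᵥ (y - Φ *ᵥ astar)) n))
        + Φᵀ *ᵥ y := by
  have h1 : (fun n => softThresh lam ((astar + Φᵀ *ᵥ (y - Φ *ᵥ astar)) n)) = astar := by
    funext n
    set C : ℝ := ∑ m, (Φ m n)^2 with hCdef
    set g : ℝ := (Φᵀ *ᵥ (y - Φ *ᵥ astar)) n with hgdef
    set s : ℝ := astar n with hsdef
    have hC : 0 ≤ C := Finset.sum_nonneg fun m _ => sq_nonneg _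
    have hg : g = ∑ m, Φ m n * (y m - (Φ *ᵥ astar) m) := by
      simp [hgdef, mulVec, dotProduct, transpose_apply]
    have hineq : ∀ t : ℝ, 0 ≤ (1/2)*C*t^2 - g*t + lam*(|s+t| - |s|) := by
      intro t
      have h0 := hmin (astar + Pi.single n t)
      unfold bpdn at h0
      have e1 : ∑ m, (y m - (Φ *ᵥ (astar + Pi.single n t)) m) ^ 2
          = ∑ m, (y m - (Φ *ᵥ astar) m) ^ 2 - 2*t*g + t^2*C := by
        have hmv : ∀ m, (Φ *ᵥ (astar + Pi.single n t)) m
            = (Φ *ᵥ astar) m + Φ m n * t := by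
          intro m
          simp [mulVec_add, mulVec_single]; try ring
        have : ∀ m, (y m - (Φ *ᵥ (astar + Pi.single n t)) m) ^ 2
            = (y m - (Φ *ᵥ astar) m) ^ 2
              - 2*t*(Φ m n * (y m - (Φ *ᵥ astar) m)) + t^2*(Φ m n)^2 := by
          intro m; rw [hmv m]; ring
        rw [Finset.sum_congr rfl fun m _ => this m]
        rw [Finset.sum_add_distrib, Finset.sum_sub_distrib, ← Finset.mul_sum,
          ← Finset.mul_sum, hg, hCdef]
      have e2 : ∑ k, |((astar + Pi.single n t : Fin N → ℝ) k)|
          = (∑ k, |astar k|) - |s| + |s+t| := by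
        have step : ∀ k, |((astar + Pi.single n t : Fin N → ℝ) k)|
            = |astar k| + (if k = n then |s+t| - |s| else 0) := by
          intro k
          by_cases hk : k = n
          · subst hk; simp [hsdef]
          · simp [Pi.single_eq_of_ne hk, hk]
        rw [Finset.sum_congr rfl fun k _ => step k, Finset.sum_add_distrib,
          Finset.sum_ite_eq' Finset.univ n (fun _ => |s+t| - |s|)]
        simp; ring
      rw [e1, e2] at h0
      linarith
    have := key C g s lam hC hlam hineq
    simpa using this
  refine ⟨h1, ?_⟩
  rw [h1]
  rw [Matrix.sub_mulVec, Matrix.one_mulVec, ← Matrix.mulVec_mulVec, Matrix.mulVec_sub]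
  ext n
  simp
  ring
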